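/- Let Φ₁ and Φ₂ be quantum channels from d×d complex matrices to m×m complex matrices, let Δ = Φ₁ − Φ₂, and suppose there is a unit vector φ ∈ ℂ^d such that M(Δ) = ‖J(Δ)‖₁ · φφᴴ. Then there exists a Hermitian m×m complex matrix C with ‖C‖₁ = ‖J(Δ)‖₁ such that J(Δ) = C ⊗ φφᴴ; in particular the support of J(Δ) is contained in ℂ^m ⊗ span{φ}. -/

import Mathlib

open Matrix Kronecker ComplexOrder

noncomputable section

/-- The PSD square root of a PSD matrix (as `Matrix.PosSemidef.sqrt` was defined in
the older Mathlib, where it has since been removed). -/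
noncomputable def Matrix.PosSemidef.sqrt {n : Type*} [Fintype n] [DecidableEq n]
    {A : Matrix n n ℂ} (hA : A.PosSemidef) : Matrix n n ℂ :=
  hA.1.eigenvectorUnitary.1 * diagonal ((↑) ∘ (√·) ∘ hA.1.eigenvalues) *
    (star hA.1.eigenvectorUnitary : Matrix n n ℂ)

/-- The matrix absolute value `|A| = √(AᴴA)`. -/
noncomputable def matAbs {n : Type*} [Fintype n] [DecidableEq n] (A : Matrix n n ℂ) :
    Matrix n n ℂ :=
  (Matrix.posSemidef_conjTranspose_mul_self A).sqrt

/-- The trace norm `‖A‖₁ = Tr √(AᴴA)`. -/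
noncomputable def traceNorm {n : Type*} [Fintype n] [DecidableEq n] (A : Matrix n n ℂ) : ℝ :=
  ((matAbs A).trace).re

/-- The positive semidefinite square root of a PSD matrix (zero otherwise). -/
noncomputable def matSqrt {n : Type*} [Fintype n] [DecidableEq n] (σ : Matrix n n ℂ) :
    Matrix n n ℂ :=
  open scoped Classical in
  if h : σ.PosSemidef then h.sqrt else 0

/-- A density matrix: positive semidefinite with unit trace. -/
def IsDensity {n : Type*} [Fintype n] [DecidableEq n] (σ : Matrix n n ℂ) : Prop :=
  σ.PosSemidef ∧ σ.trace = 1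

/-- The Choi operator of a linear map between matrix algebras. -/
noncomputable def choi {d m : ℕ}
    (S : Matrix (Fin d) (Fin d) ℂ →ₗ[ℂ] Matrix (Fin m) (Fin m) ℂ) :
    Matrix (Fin m × Fin d) (Fin m × Fin d) ℂ :=
  ∑ i : Fin d, ∑ j : Fin d,
    (S (Matrix.single i j 1)) ⊗ₖ (Matrix.single i j 1)

/-- The ME-norm `‖S‖_ME = ‖J(S)‖₁ / d`. -/
noncomputable def MENorm {d m : ℕ}
    (S : Matrix (Fin d) (Fin d) ℂ →ₗ[ℂ] Matrix (Fin m) (Fin m) ℂ) : ℝ :=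
  traceNorm (choi S) / d

/-- The diamond norm: supremum over density matrices σ of
`‖(1 ⊗ √σ) J(S) (1 ⊗ √σ)‖₁`. -/
noncomputable def diamondNorm {d m : ℕ}
    (S : Matrix (Fin d) (Fin d) ℂ →ₗ[ℂ] Matrix (Fin m) (Fin m) ℂ) : ℝ :=
  ⨆ σ : {σ : Matrix (Fin d) (Fin d) ℂ // IsDensity σ},
    traceNorm (((1 : Matrix (Fin m) (Fin m) ℂ) ⊗ₖ matSqrt σ.1) * choi S *
      ((1 : Matrix (Fin m) (Fin m) ℂ) ⊗ₖ matSqrt σ.1))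

/-- The M-operator `M(S) = Tr_B |J(S)|`. -/
noncomputable def Mop {d m : ℕ}
    (S : Matrix (Fin d) (Fin d) ℂ →ₗ[ℂ] Matrix (Fin m) (Fin m) ℂ) :
    Matrix (Fin d) (Fin d) ℂ :=
  Matrix.of fun k l => ∑ b : Fin m, matAbs (choi S) (b, k) (b, l)

/-- A quantum channel: completely positive (PSD Choi operator, by Choi's theorem)
and trace preserving. -/
def IsQChannel {d m : ℕ}
    (S : Matrix (Fin d) (Fin d) ℂ →ₗ[ℂ] Matrix (Fin m) (Fin m) ℂ) : Prop :=
  (choi S).PosSemidef ∧ ∀ ρ : Matrix (Fin d) (Fin d) ℂ, (S ρ).trace = ρ.trace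



section AuxLemmas

section SqrtPort

open scoped MatrixOrder

lemma Matrix.PosSemidef.sqrt_eq_cfc {n : Type*} [Fintype n] [DecidableEq n]
    {A : Matrix n n ℂ} (hA : A.PosSemidef) : hA.sqrt = cfc Real.sqrt A := by
  rw [hA.1.cfc_eq, IsHermitian.cfc, Unitary.conjStarAlgAut_apply]
  rfl

lemma Matrix.PosSemidef.spec_nonneg {n : Type*} [Fintype n] [DecidableEq n]
    {A : Matrix n n ℂ} (hA : A.PosSemidef) : ∀ x ∈ spectrum ℝ A, 0 ≤ x := by
  intro x hx
  rw [hA.1.spectrum_real_eq_range_eigenvalues] at hx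
  obtain ⟨i, rfl⟩ := hx
  exact hA.eigenvalues_nonneg i

lemma Matrix.PosSemidef.sqrt_mul_self {n : Type*} [Fintype n] [DecidableEq n]
    {A : Matrix n n ℂ} (hA : A.PosSemidef) : hA.sqrt * hA.sqrt = A := by
  rw [hA.sqrt_eq_cfc, ← cfc_mul Real.sqrt Real.sqrt A,
    cfc_congr (g := fun x : ℝ => x) (fun x hx => Real.mul_self_sqrt (hA.spec_nonneg x hx)),
    cfc_id' (R := ℝ) (a := A) (ha := hA.1.isSelfAdjoint)]

lemma Matrix.PosSemidef.posSemidef_sqrt {n : Type*} [Fintype n] [DecidableEq n]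
    {A : Matrix n n ℂ} (hA : A.PosSemidef) : hA.sqrt.PosSemidef := by
  rw [hA.sqrt_eq_cfc]
  exact Matrix.nonneg_iff_posSemidef.mp (cfc_nonneg (fun x _ => Real.sqrt_nonneg x))

lemma Matrix.PosSemidef.eq_sqrt_of_sq_eq {n : Type*} [Fintype n] [DecidableEq n]
    {B : Matrix n n ℂ} (hB : B.PosSemidef) {A : Matrix n n ℂ} (hA : A.PosSemidef)
    (h : B ^ 2 = A) : B = hA.sqrt := by
  rw [hA.sqrt_eq_cfc, ← h, ← cfc_comp_pow Real.sqrt 2 B,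
    cfc_congr (g := fun x : ℝ => x) (fun x hx => Real.sqrt_sq (hB.spec_nonneg x hx)),
    cfc_id' (R := ℝ) (a := B) (ha := hB.1.isSelfAdjoint)]

lemma Matrix.posSemidef_iff_eq_transpose_mul_self {n : Type*} [Fintype n] [DecidableEq n]
    {A : Matrix n n ℂ} : A.PosSemidef ↔ ∃ B : Matrix n n ℂ, A = Bᴴ * B := by
  constructor
  · intro hA
    refine ⟨hA.sqrt, ?_⟩
    rw [hA.posSemidef_sqrt.1.eq, hA.sqrt_mul_self]
  · rintro ⟨B, rfl⟩
    exact posSemidef_conjTranspose_mul_self B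

end SqrtPort

lemma kron_conjTranspose {l m p q : Type*} (A : Matrix l m ℂ) (B : Matrix p q ℂ) :
    (A ⊗ₖ B)ᴴ = Aᴴ ⊗ₖ Bᴴ := by
  ext ⟨a, b⟩ ⟨c, d⟩
  simp [conjTranspose_apply, kroneckerMap_apply]

lemma kron_posSemidef {m p : Type*} [Fintype m] [DecidableEq m] [Fintype p] [DecidableEq p]
    {A : Matrix m m ℂ} {B : Matrix p p ℂ} (hA : A.PosSemidef) (hB : B.PosSemidef) :
    (A ⊗ₖ B).PosSemidef := by
  obtain ⟨X, rfl⟩ := posSemidef_iff_eq_transpose_mul_self.mp hA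
  obtain ⟨Y, rfl⟩ := posSemidef_iff_eq_transpose_mul_self.mp hB
  rw [mul_kronecker_mul, ← kron_conjTranspose]
  exact posSemidef_conjTranspose_mul_self _

lemma psd_trace_zero {n : Type*} [Fintype n] [DecidableEq n] {A : Matrix n n ℂ}
    (h : A.PosSemidef) (ht : A.trace = 0) : A = 0 := by
  obtain ⟨B, rfl⟩ := posSemidef_iff_eq_transpose_mul_self.mp h
  suffices hB : B = 0 by simp [hB]
  have hsum : ∑ j : n, (star (fun i => B i j) ⬝ᵥ (fun i => B i j)) = 0 := by
    rw [← ht]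
    simp [trace, Matrix.mul_apply, dotProduct, conjTranspose_apply, diag]
  have hnn : ∀ j ∈ Finset.univ, (0:ℂ) ≤ star (fun i => B i j) ⬝ᵥ (fun i => B i j) := by
    intro j _
    exact dotProduct_star_self_nonneg _
  have hz := (Finset.sum_eq_zero_iff_of_nonneg hnn).mp hsum
  ext i j
  have hj := hz j (Finset.mem_univ j)
  have hcol := dotProduct_star_self_eq_zero.mp hj
  simpa using congrFun hcol i

lemma psd_mul_eq_zero {n : Type*} [Fintype n] [DecidableEq n] {A R : Matrix n n ℂ}
    (hA : A.PosSemidef) (h : Rᴴ * A * R = 0) : A * R = 0 := by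
  obtain ⟨B, rfl⟩ := posSemidef_iff_eq_transpose_mul_self.mp hA
  have h2 : (B * R)ᴴ * (B * R) = 0 := by
    rw [conjTranspose_mul]
    calc Rᴴ * Bᴴ * (B * R) = Rᴴ * (Bᴴ * B) * R := by simp only [Matrix.mul_assoc]
    _ = 0 := h
  have hBR := Matrix.conjTranspose_mul_self_eq_zero.mp h2
  calc Bᴴ * B * R = Bᴴ * (B * R) := Matrix.mul_assoc _ _ _
  _ = 0 := by rw [hBR, Matrix.mul_zero]

lemma mul_one_kron_apply {m d : ℕ} (X : Matrix (Fin m × Fin d) (Fin m × Fin d) ℂ)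
    (P : Matrix (Fin d) (Fin d) ℂ) (a b : Fin m) (k l : Fin d) :
    (X * ((1 : Matrix (Fin m) (Fin m) ℂ) ⊗ₖ P)) (a, k) (b, l)
      = ∑ l' : Fin d, X (a, k) (b, l') * P l' l := by
  rw [Matrix.mul_apply, Fintype.sum_prod_type]
  simp [kroneckerMap_apply, one_apply, mul_ite, Finset.sum_ite_eq']

lemma one_kron_mul_apply {m d : ℕ} (X : Matrix (Fin m × Fin d) (Fin m × Fin d) ℂ)
    (P : Matrix (Fin d) (Fin d) ℂ) (a b : Fin m) (k l : Fin d) :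
    ((((1 : Matrix (Fin m) (Fin m) ℂ) ⊗ₖ P)) * X) (a, k) (b, l)
      = ∑ k' : Fin d, P k k' * X (a, k') (b, l) := by
  rw [Matrix.mul_apply, Fintype.sum_prod_type]
  simp [kroneckerMap_apply, one_apply, ite_mul, Finset.sum_ite_eq]

end AuxLemmas

/-- if `M(Δ) = ‖J(Δ)‖₁ · φφᴴ` for a unit vector `φ`, where
`Δ = Φ₁ − Φ₂` is a difference of channels, then `J(Δ) = C ⊗ φφᴴ` for some
Hermitian `C` with `‖C‖₁ = ‖J(Δ)‖₁`; in particular the support of `J(Δ)` is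
contained in `ℂ^m ⊗ span{φ}`. -/
theorem stmt3 {d m : ℕ} (hd : 1 ≤ d)
    (Phi1 Phi2 : Matrix (Fin d) (Fin d) ℂ →ₗ[ℂ] Matrix (Fin m) (Fin m) ℂ)
    (h1 : IsQChannel Phi1) (h2 : IsQChannel Phi2)
    (Delta : Matrix (Fin d) (Fin d) ℂ →ₗ[ℂ] Matrix (Fin m) (Fin m) ℂ)
    (hDelta : Delta = Phi1 - Phi2)
    (phi : Fin d → ℂ) (hphi : star phi ⬝ᵥ phi = 1)
    (hM : Mop Delta = (traceNorm (choi Delta) : ℂ) • Matrix.vecMulVec phi (star phi)) :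
    ∃ C : Matrix (Fin m) (Fin m) ℂ, C.IsHermitian ∧
      traceNorm C = traceNorm (choi Delta) ∧
      choi Delta = C ⊗ₖ Matrix.vecMulVec phi (star phi) := by
  classical
  set J : Matrix (Fin m × Fin d) (Fin m × Fin d) ℂ := choi Delta with hJdef
  set t : ℝ := traceNorm (choi Delta) with htdef
  set P : Matrix (Fin d) (Fin d) ℂ := Matrix.vecMulVec phi (star phi) with hPdef
  set Q : Matrix (Fin m × Fin d) (Fin m × Fin d) ℂ :=
    (1 : Matrix (Fin m) (Fin m) ℂ) ⊗ₖ P with hQdef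
  -- J is Hermitian
  have hchoi_sub : J = choi Phi1 - choi Phi2 := by
    rw [hJdef, hDelta]
    unfold choi
    rw [← Finset.sum_sub_distrib]
    refine Finset.sum_congr rfl fun i _ => ?_
    rw [← Finset.sum_sub_distrib]
    refine Finset.sum_congr rfl fun j _ => ?_
    ext ⟨a, k⟩ ⟨b, l⟩
    simp [kroneckerMap_apply, sub_mul]
  have hJherm : J.IsHermitian := by
    rw [hchoi_sub]; exact h1.1.1.sub h2.1.1
  -- the absolute value
  set A : Matrix (Fin m × Fin d) (Fin m × Fin d) ℂ := matAbs J with hAdef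
  have hA : A.PosSemidef := (posSemidef_conjTranspose_mul_self J).posSemidef_sqrt
  have hAsq : A * A = J * J := by
    rw [hAdef, matAbs, Matrix.PosSemidef.sqrt_mul_self, hJherm.eq]
  -- facts about P
  have hPP : P * P = P := by
    ext k l
    rw [Matrix.mul_apply]
    have h1 : ∀ j, P k j * P j l = (star (phi j) * phi j) * P k l := by
      intro j; simp only [hPdef, vecMulVec_apply, Pi.star_apply]; ring
    rw [Finset.sum_congr rfl (fun j _ => h1 j), ← Finset.sum_mul]
    have h2 : ∑ j, star (phi j) * phi j = 1 := by simpa [dotProduct] using hphi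
    rw [h2, one_mul]
  have hPherm : Pᴴ = P := by
    ext k l
    simp [hPdef, conjTranspose_apply, vecMulVec_apply, mul_comm]
  have hPtrace : P.trace = 1 := by
    simp only [hPdef, trace, diag_apply, vecMulVec_apply, Pi.star_apply]
    rw [← hphi]
    simp [dotProduct, mul_comm]
  have hPpsd : P.PosSemidef := by
    rw [posSemidef_iff_dotProduct_mulVec]
    constructor
    · exact hPherm
    · intro x
      have hexp : star x ⬝ᵥ P *ᵥ x = star (star phi ⬝ᵥ x) * (star phi ⬝ᵥ x) := by
        simp only [hPdef, dotProduct, mulVec, vecMulVec_apply, Pi.star_apply, star_sum,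
          star_mul', star_star, Finset.mul_sum, Finset.sum_mul]
        rw [Finset.sum_comm]
        refine Finset.sum_congr rfl fun i _ => Finset.sum_congr rfl fun j _ => by ring
      rw [hexp]
      exact star_mul_self_nonneg _
  -- facts about Q
  have hQQ : Q * Q = Q := by
    rw [hQdef, ← mul_kronecker_mul, Matrix.one_mul, hPP]
  have hQherm : Qᴴ = Q := by
    rw [hQdef, kron_conjTranspose, conjTranspose_one, hPherm]
  -- trace of A is t
  have htA : A.trace = (t : ℂ) := by
    have hstar : star A.trace = A.trace := by
      rw [← Matrix.trace_conjTranspose, hA.1]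
    have hre : (A.trace.re : ℂ) = A.trace := by
      rw [← Complex.conj_eq_iff_re]
      exact hstar
    rw [htdef, traceNorm]
    exact hre.symm
  -- trace of A * Q is t
  have htrAQ : (A * Q).trace = (t : ℂ) := by
    have h1 : (A * Q).trace = ∑ k : Fin d, ∑ l : Fin d, Mop Delta k l * P l k := by
      rw [Matrix.trace, Fintype.sum_prod_type]
      simp only [Matrix.diag_apply, hQdef, mul_one_kron_apply]
      simp only [Mop, Matrix.of_apply, Finset.sum_mul, ← hJdef, ← hAdef]
      rw [Finset.sum_comm]
      exact Finset.sum_congr rfl fun k _ => Finset.sum_comm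
    rw [h1, hM]
    simp only [Matrix.smul_apply, ← hPdef, ← htdef, smul_eq_mul, mul_assoc, ← Finset.mul_sum]
    have h2 : ∑ k : Fin d, ∑ l : Fin d, P k l * P l k = (P * P).trace := by
      rw [Matrix.trace]
      exact Finset.sum_congr rfl fun k _ => (Matrix.mul_apply).symm
    rw [h2, hPP, hPtrace, mul_one]
  -- the projector complement
  set R : Matrix (Fin m × Fin d) (Fin m × Fin d) ℂ := 1 - Q with hRdef
  have hRherm : Rᴴ = R := by rw [hRdef, conjTranspose_sub, conjTranspose_one, hQherm]
  have hRR : R * R = R := by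
    rw [hRdef, Matrix.mul_sub, Matrix.sub_mul, Matrix.sub_mul, Matrix.mul_one, Matrix.one_mul,
      hQQ, Matrix.mul_one]
    simp
  have hRpsdX : (R * A * R).PosSemidef := by
    have := hA.mul_mul_conjTranspose_same R
    rwa [hRherm] at this
  have htrX : (R * A * R).trace = 0 := by
    rw [Matrix.trace_mul_cycle, hRR, Matrix.trace_mul_comm, hRdef,
      Matrix.mul_sub, Matrix.mul_one, Matrix.trace_sub, htA, htrAQ, sub_self]
  have hX0 : R * A * R = 0 := psd_trace_zero hRpsdX htrX
  have hAR : A * R = 0 := by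
    apply psd_mul_eq_zero hA
    rw [hRherm]; exact hX0
  have hJJR : J * J * R = 0 := by
    rw [← hAsq, Matrix.mul_assoc, hAR, Matrix.mul_zero]
  have hJR : J * R = 0 := by
    apply Matrix.conjTranspose_mul_self_eq_zero.mp
    rw [conjTranspose_mul, hRherm, hJherm.eq]
    calc R * J * (J * R) = R * (J * J * R) := by simp only [Matrix.mul_assoc]
    _ = 0 := by rw [hJJR, Matrix.mul_zero]
  have hJQ : J * Q = J := by
    have h1 : J * (1 - Q) = 0 := hJR
    rw [Matrix.mul_sub, Matrix.mul_one, sub_eq_zero] at h1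
    exact h1.symm
  have hQJ : Q * J = J := by
    have := congrArg Matrix.conjTranspose hJQ
    rwa [conjTranspose_mul, hQherm, hJherm.eq] at this
  have hJeq : J = Q * J * Q := by
    rw [Matrix.mul_assoc, hJQ, hQJ]
  -- the matrix C
  set C : Matrix (Fin m) (Fin m) ℂ := Matrix.of (fun a b =>
    ∑ k' : Fin d, ∑ l' : Fin d, star (phi k') * J (a, k') (b, l') * phi l') with hCdef
  have key : ∀ a b k l, J (a, k) (b, l) = C a b * (phi k * star (phi l)) := by
    intro a b k l
    have expand : J (a, k) (b, l)
        = ∑ l' : Fin d, (∑ k' : Fin d, P k k' * J (a, k') (b, l')) * P l' l := by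
      conv_lhs => rw [hJeq]
      rw [hQdef, mul_one_kron_apply]
      refine Finset.sum_congr rfl fun l' _ => ?_
      rw [one_kron_mul_apply]
    rw [expand, hCdef]
    simp only [Matrix.of_apply, Finset.sum_mul]
    rw [Finset.sum_comm]
    refine Finset.sum_congr rfl fun k' _ => ?_
    refine Finset.sum_congr rfl fun l' _ => ?_
    simp only [hPdef, vecMulVec_apply, Pi.star_apply]
    ring
  have hJC : J = C ⊗ₖ P := by
    ext ⟨a, k⟩ ⟨b, l⟩
    rw [kroneckerMap_apply, key a b k l]
    simp [hPdef, vecMulVec_apply]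
  -- some entry of phi is nonzero
  obtain ⟨k0, hk0⟩ : ∃ k, phi k ≠ 0 := by
    by_contra hc
    push_neg at hc
    rw [show phi = 0 from funext hc] at hphi
    simp [dotProduct] at hphi
  -- C is Hermitian
  have hCherm : C.IsHermitian := by
    have h1 : Cᴴ ⊗ₖ P = C ⊗ₖ P := by
      calc Cᴴ ⊗ₖ P = (C ⊗ₖ P)ᴴ := by rw [kron_conjTranspose, hPherm]
      _ = C ⊗ₖ P := by rw [← hJC]; exact hJherm.eq
    show Cᴴ = C
    ext a b
    have h2 := congrFun (congrFun h1 (a, k0)) (b, k0)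
    simp only [kroneckerMap_apply] at h2
    have hPk : P k0 k0 ≠ 0 := by
      simp only [hPdef, vecMulVec_apply, Pi.star_apply]
      exact mul_ne_zero hk0 (star_ne_zero.mpr hk0)
    exact mul_right_cancel₀ hPk h2
  -- |C ⊗ P| = |C| ⊗ P
  have hCabs : matAbs (C ⊗ₖ P) = matAbs C ⊗ₖ P := by
    have hMC : (matAbs C).PosSemidef := (posSemidef_conjTranspose_mul_self C).posSemidef_sqrt
    have hpsd : (matAbs C ⊗ₖ P).PosSemidef := kron_posSemidef hMC hPpsd
    have hsq : (matAbs C ⊗ₖ P) ^ 2 = (C ⊗ₖ P)ᴴ * (C ⊗ₖ P) := by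
      rw [pow_two, ← mul_kronecker_mul, kron_conjTranspose, hPherm, ← mul_kronecker_mul, hPP]
      rw [matAbs, Matrix.PosSemidef.sqrt_mul_self]
    rw [matAbs]
    exact (Matrix.PosSemidef.eq_sqrt_of_sq_eq hpsd _ hsq).symm
  refine ⟨C, hCherm, ?_, hJC⟩
  -- trace norms agree
  have habs : matAbs J = matAbs C ⊗ₖ P := by rw [hJC, hCabs]
  have htr : (matAbs J).trace = (matAbs C).trace := by
    rw [habs, Matrix.trace_kronecker, hPtrace, mul_one]
  rw [htdef, traceNorm, traceNorm, ← hJdef, htr]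


end
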